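/- Lemma (color conservation in Algorithm 1): For any execution of Algorithm 1, the counts #r = |{x : color_x = r}|, #b = |{x : color_x = b}|, and #ini = |{x : color_x = ini}| are unchanged by any interaction except an interaction between the base station and an agent v satisfying depth_v = 1 and color_v = ini; such an interaction decreases #ini by one and increases exactly one of #r, #b by one (while flipping the base-station variable RB). -/
import Mathlib


/-- Agent colors of Algorithm 1. -/
inductive Col : Type
  | ini | r | b
deriving DecidableEq

/-- Base-station variable `RB`. -/
inductive RB : Type
  | r | b
deriving DecidableEq

/-- Flip the base-station variable. -/
def RB.flip : RB → RB
  | .r => .b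
  | .b => .r

/-- The color assigned by the base station. -/
def RB.toCol : RB → Col
  | .r => .r
  | .b => .b

/-- An agent state: a color and a depth (`none` is ⊥). -/
abbrev AgSt := Col × Option ℕ

/-- Effect of an interaction between the base station and one agent. -/
def bsStep (rb : RB) (a : AgSt) : RB × AgSt :=
  match a with
  | (.ini, some 1) => (rb.flip, (rb.toCol, some 1))
  | (c, none)      => (rb, (c, some 1))
  | a              => (rb, a)

/-- Effect of an interaction between two agents x and y:
first the depth propagation, then the color swap towards a smaller depth. -/
def agStep (x y : AgSt) : AgSt × AgSt :=
  let d : Option ℕ × Option ℕ :=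
    match x.2, y.2 with
    | none, some e => (some (e + 1), some e)
    | some e, none => (some e, some (e + 1))
    | dx, dy       => (dx, dy)
  match d with
  | (some dx, some dy) =>
      if dx < dy ∧ y.1 = Col.ini then ((Col.ini, some dx), (x.1, some dy))
      else if dy < dx ∧ x.1 = Col.ini then ((y.1, some dx), (Col.ini, some dy))
      else ((x.1, some dx), (y.1, some dy))
  | (dx, dy) => ((x.1, dx), (y.1, dy))

/-- A configuration: the base-station variable together with the agents' states. -/
abbrev Conf (n : ℕ) := RB × (Fin n → AgSt)

/-- One step of Algorithm 1 on a communication graph: either the base station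
interacts with an adjacent agent, or two adjacent distinct agents interact. -/
def Step {n : ℕ} (Adj : Fin n → Fin n → Prop) (BAdj : Fin n → Prop)
    (c c' : Conf n) : Prop :=
  (∃ i : Fin n, BAdj i ∧ c'.1 = (bsStep c.1 (c.2 i)).1 ∧
      c'.2 = Function.update c.2 i (bsStep c.1 (c.2 i)).2) ∨
  (c'.1 = c.1 ∧ ∃ i j : Fin n, i ≠ j ∧ Adj i j ∧
      c'.2 = Function.update (Function.update c.2 i (agStep (c.2 i) (c.2 j)).1) j
        (agStep (c.2 i) (c.2 j)).2)

/-- Number of agents whose color is `x`. -/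
def cnt {n : ℕ} (C : Fin n → AgSt) (x : Col) : ℕ :=
  (Finset.univ.filter fun a => (C a).1 = x).card


lemma cnt_update {n : ℕ} (C : Fin n → AgSt) (i : Fin n) (a : AgSt) (x : Col) :
    cnt (Function.update C i a) x + (if (C i).1 = x then 1 else 0)
      = cnt C x + (if a.1 = x then 1 else 0) := by
  classical
  unfold cnt
  rw [Finset.card_filter, Finset.card_filter]
  have h : (fun j => if ((Function.update C i a j).1 = x) then (1:ℕ) else 0)
      = Function.update (fun j => if (C j).1 = x then 1 else 0) i
          (if a.1 = x then 1 else 0) := by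
    funext j
    by_cases hj : j = i
    · subst hj; simp
    · simp [Function.update_of_ne hj]
  rw [h, Finset.sum_update_of_mem (Finset.mem_univ i),
    ← Finset.add_sum_erase _ _ (Finset.mem_univ i), Finset.erase_eq]
  omega

lemma bsStep_eq (rb : RB) (a : AgSt) (h : a ≠ (Col.ini, some 1)) :
    (bsStep rb a).1 = rb ∧ ((bsStep rb a).2).1 = a.1 := by
  obtain ⟨c, d⟩ := a
  cases c <;> rcases d with _ | (_ | (_ | k)) <;>
    first | exact ⟨rfl, rfl⟩ | exact absurd rfl h

lemma agStep_colors (x y : AgSt) :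
    ((agStep x y).1.1 = x.1 ∧ (agStep x y).2.1 = y.1) ∨
    ((agStep x y).1.1 = y.1 ∧ (agStep x y).2.1 = x.1) := by
  obtain ⟨cx, dx⟩ := x
  obtain ⟨cy, dy⟩ := y
  unfold agStep
  rcases dx with _ | dx <;> rcases dy with _ | dy <;> dsimp <;>
    (try split_ifs) <;> simp_all

theorem stmt13 (n : ℕ) (Adj : Fin n → Fin n → Prop) (BAdj : Fin n → Prop)
    (C C' : Conf n) (hstep : Step Adj BAdj C C') :
    (cnt C'.2 .r = cnt C.2 .r ∧ cnt C'.2 .b = cnt C.2 .b ∧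
      cnt C'.2 .ini = cnt C.2 .ini ∧ C'.1 = C.1) ∨
    (∃ v : Fin n, BAdj v ∧ C.2 v = (Col.ini, some 1) ∧
      cnt C'.2 .ini + 1 = cnt C.2 .ini ∧ C'.1 = C.1.flip ∧
      ((cnt C'.2 .r = cnt C.2 .r + 1 ∧ cnt C'.2 .b = cnt C.2 .b) ∨
       (cnt C'.2 .b = cnt C.2 .b + 1 ∧ cnt C'.2 .r = cnt C.2 .r))) := by
  classical
  rcases hstep with ⟨i, hB, h1, h2⟩ | ⟨h1, i, j, hij, hAdj, h2⟩
  · by_cases hv : C.2 i = (Col.ini, some 1)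
    · right
      refine ⟨i, hB, hv, ?_⟩
      have hb : bsStep C.1 (C.2 i) = (C.1.flip, (C.1.toCol, some 1)) := by
        rw [hv]; rfl
      rw [hb] at h1 h2
      have hr := cnt_update C.2 i (C.1.toCol, some 1) .r
      have hbc := cnt_update C.2 i (C.1.toCol, some 1) .b
      have hi := cnt_update C.2 i (C.1.toCol, some 1) .ini
      rw [← h2] at hr hbc hi
      rw [hv] at hr hbc hi
      cases hc : C.1 <;> simp [hc, RB.toCol] at hr hbc hi h1 ⊢
      · exact ⟨by omega, h1, Or.inl ⟨by omega, by omega⟩⟩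
      · exact ⟨by omega, h1, Or.inr ⟨by omega, by omega⟩⟩
    · left
      obtain ⟨e1, e2⟩ := bsStep_eq C.1 (C.2 i) hv
      have key : ∀ x, cnt C'.2 x = cnt C.2 x := by
        intro x
        have h := cnt_update C.2 i (bsStep C.1 (C.2 i)).2 x
        rw [← h2, e2] at h
        omega
      exact ⟨key _, key _, key _, h1.trans e1⟩
  · left
    set a1 := (agStep (C.2 i) (C.2 j)).1 with ha1
    set a2 := (agStep (C.2 i) (C.2 j)).2 with ha2
    have key : ∀ x, cnt C'.2 x = cnt C.2 x := by
      intro x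
      have k1 := cnt_update (Function.update C.2 i a1) j a2 x
      have k2 := cnt_update C.2 i a1 x
      rw [← h2, Function.update_of_ne (Ne.symm hij)] at k1
      rcases agStep_colors (C.2 i) (C.2 j) with ⟨c1, c2⟩ | ⟨c1, c2⟩ <;>
        rw [← ha1] at c1 <;> rw [← ha2] at c2 <;> rw [c1] at k2 <;> rw [c2] at k1 <;> omega
    exact ⟨key _, key _, key _, h1⟩
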